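/- arXiv:2301.04378 — 2 statements merged into one kernel-verified Lean document; each statement's English description precedes it below -/
import Mathlib

section
/- Let X_1, ..., X_{n+1} be exchangeable real-valued random variables and let Q be the empirical (1-δ)-quantile of the multiset {X_1, ..., X_{n+1}} (i.e., the ⌈(1-δ)(n+1)⌉-th smallest value). Then P(X_{n+1} ≤ Q) ≥ 1 - δ. -/
open MeasureTheory
open scoped ENNReal NNReal

/-- The `k`-th smallest element (1-indexed) of the multiset of values of `a`;
returns `d` if `k` is out of range. -/
def orderStat {α : Type*} [LinearOrder α] (d : α) {m : ℕ} (a : Fin m → α) (k : ℕ) : α :=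
  (Multiset.sort (↑(List.ofFn a) : Multiset α) (· ≤ ·)).getD (k - 1) d

/-- A finite family of random elements is exchangeable if the joint law is invariant
under every permutation of the indices. -/
def Exchangeable {Ω α : Type*} [MeasurableSpace Ω] [MeasurableSpace α]
    (P : Measure Ω) {m : ℕ} (X : Fin m → Ω → α) : Prop :=
  ∀ π : Equiv.Perm (Fin m),
    Measure.map (fun ω => fun i => X (π i) ω) P = Measure.map (fun ω => fun i => X i ω) P


theorem countP_ofFn' {m : ℕ} (x : Fin m → ℝ) (p : ℝ → Prop) [DecidablePred p] :
    (List.ofFn x).countP (fun y => decide (p y)) = (Finset.univ.filter (fun i => p (x i))).card := by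
  induction m with
  | zero => simp
  | succ n ih =>
    rw [List.ofFn_succ, List.countP_cons, ih (fun i => x i.succ), Finset.card_filter,
      Finset.card_filter, Fin.sum_univ_succ]
    simp [add_comm]

theorem countP_add_countP_not (p : ℝ → Bool) (l : List ℝ) :
    l.countP p + l.countP (fun a => !p a) = l.length := by
  induction l with
  | nil => simp
  | cons a l ih => rw [List.countP_cons, List.countP_cons]; by_cases h : p a <;> simp [h] <;> omega

theorem sorted_le_of_le {s : List ℝ} (hs : s.Pairwise (· ≤ ·)) {i j : ℕ} (hij : i ≤ j)
    (hj : j < s.length) : s[i]'(lt_of_le_of_lt hij hj) ≤ s[j] := by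
  rcases eq_or_lt_of_le hij with rfl|h'
  · rfl
  · exact List.pairwise_iff_getElem.mp hs i j _ _ h'

theorem sorted_getElem_lt_iff {s : List ℝ} (hs : s.Pairwise (· ≤ ·)) (v : ℝ) {j : ℕ}
    (hj : j < s.length) : s[j] < v ↔ j < s.countP (fun y => decide (y < v)) := by
  set p : ℝ → Bool := fun y => decide (y < v) with hp
  constructor
  · intro h
    have h1 : (s.take (j+1)).countP p = (s.take (j+1)).length := by
      rw [List.countP_eq_length]
      intro a ha
      obtain ⟨i, hi, rfl⟩ := List.mem_iff_getElem.mp ha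
      rw [List.getElem_take]
      have hi' : i ≤ j := by simp at hi; omega
      simpa [hp] using lt_of_le_of_lt (sorted_le_of_le hs hi' hj) h
    have h2 : s.countP p = (s.take (j+1)).countP p + (s.drop (j+1)).countP p := by
      rw [← List.countP_append, List.take_append_drop]
    have h3 : (s.take (j+1)).length = j+1 := by simp; omega
    omega
  · intro h
    by_contra hlt
    have h0 : (s.drop j).countP p = 0 := by
      rw [List.countP_eq_zero]
      intro a ha
      obtain ⟨i, hi, rfl⟩ := List.mem_iff_getElem.mp ha
      have hji : j + i < s.length := by simp at hi; omega
      have he : (s.drop j)[i] = s[j+i]'hji := List.getElem_drop ..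
      rw [he]
      have : s[j] ≤ s[j+i]'hji := sorted_le_of_le hs (Nat.le_add_right j i) hji
      simp only [hp, decide_eq_true_eq]
      intro hc; exact hlt (lt_of_le_of_lt this hc)
    have h2 : s.countP p = (s.take j).countP p + (s.drop j).countP p := by
      rw [← List.countP_append, List.take_append_drop]
    have h3 : (s.take j).countP p ≤ (s.take j).length := List.countP_le_length
    have h4 : (s.take j).length ≤ j := by simp
    omega

theorem le_orderStat_iff {m : ℕ} (x : Fin m → ℝ) (v : ℝ) {k : ℕ} (hk1 : 1 ≤ k) (hk2 : k ≤ m) :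
    v ≤ orderStat 0 x k ↔ (Finset.univ.filter fun i => x i < v).card < k := by
  set s := Multiset.sort (↑(List.ofFn x) : Multiset ℝ) (· ≤ ·) with hsdef
  have hlen : s.length = m := by
    rw [hsdef, Multiset.length_sort]; simp
  have hsorted : s.Pairwise (· ≤ ·) := Multiset.pairwise_sort ..
  have hidx : k - 1 < s.length := by omega
  have hperm : s.Perm (List.ofFn x) := Multiset.coe_eq_coe.mp (Multiset.sort_eq ..)
  have hcount : s.countP (fun y => decide (y < v)) = (Finset.univ.filter fun i => x i < v).card := by
    rw [hperm.countP_eq, countP_ofFn']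
  have hgetD : orderStat 0 x k = s[k-1] := List.getD_eq_getElem s 0 hidx
  rw [hgetD, ← not_lt, sorted_getElem_lt_iff hsorted v hidx, hcount]
  omega

theorem card_rank_ge {m : ℕ} (x : Fin m → ℝ) {k : ℕ} (hk1 : 1 ≤ k) (hk2 : k ≤ m) :
    (Finset.univ.filter fun j => k ≤ (Finset.univ.filter fun i => x i < x j).card).card ≤ m - k := by
  set Q := orderStat 0 x k with hQ
  have hiff : ∀ j, (k ≤ (Finset.univ.filter fun i => x i < x j).card) ↔ Q < x j := by
    intro j
    rw [← not_lt, ← le_orderStat_iff x (x j) hk1 hk2, not_le]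
  have hre : (Finset.univ.filter fun j => k ≤ (Finset.univ.filter fun i => x i < x j).card)
      = (Finset.univ.filter fun j => Q < x j) := by
    apply Finset.filter_congr; intro j _; simp [hiff j]
  rw [hre]
  -- now count elements > Q
  set s := Multiset.sort (↑(List.ofFn x) : Multiset ℝ) (· ≤ ·) with hsdef
  have hlen : s.length = m := by rw [hsdef, Multiset.length_sort]; simp
  have hsorted : s.Pairwise (· ≤ ·) := Multiset.pairwise_sort ..
  have hidx : k - 1 < s.length := by omega
  have hperm : s.Perm (List.ofFn x) := Multiset.coe_eq_coe.mp (Multiset.sort_eq ..)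
  have hQs : Q = s[k-1] := List.getD_eq_getElem s 0 hidx
  have hcount : s.countP (fun y => decide (Q < y)) = (Finset.univ.filter fun j => Q < x j).card := by
    rw [hperm.countP_eq, countP_ofFn']
  -- first k elements are ≤ Q
  have htake : (s.take k).countP (fun y => !decide (Q < y)) = (s.take k).length := by
    rw [List.countP_eq_length]
    intro a ha
    obtain ⟨i, hi, rfl⟩ := List.mem_iff_getElem.mp ha
    rw [List.getElem_take]
    have hi' : i ≤ k - 1 := by simp at hi; omega
    have : s[i]'(by omega) ≤ s[k-1] := sorted_le_of_le hsorted hi' hidx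
    simp only [Bool.not_eq_true', decide_eq_false_iff_not, not_lt, hQs]
    exact this
  have hlentake : (s.take k).length = k := by simp; omega
  have hnot : k ≤ s.countP (fun y => !decide (Q < y)) := by
    have h2 : s.countP (fun y => !decide (Q < y))
        = (s.take k).countP (fun y => !decide (Q < y)) + (s.drop k).countP (fun y => !decide (Q < y)) := by
      rw [← List.countP_append, List.take_append_drop]
    omega
  have htot := countP_add_countP_not (fun y => decide (Q < y)) s
  omega

theorem card_filter_comp_perm {m : ℕ} (σ : Equiv.Perm (Fin m)) (q : Fin m → Prop) [DecidablePred q] :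
    (Finset.univ.filter fun i => q (σ i)).card = (Finset.univ.filter q).card := by
  apply Finset.card_bij (fun i _ => σ i)
  · intro a ha; simpa using (Finset.mem_filter.mp ha).2
  · intro a _ b _ h; exact σ.injective h
  · intro b hb
    refine ⟨σ.symm b, ?_, by simp⟩
    simp only [Finset.mem_filter, Finset.mem_univ, true_and, Equiv.apply_symm_apply]
    exact (Finset.mem_filter.mp hb).2


/-- exchangeable quantile lemma. -/
theorem stmt0 {Ω : Type*} [MeasurableSpace Ω] (P : Measure Ω) [IsProbabilityMeasure P]
    (n : ℕ) (X : Fin (n + 1) → Ω → ℝ) (hmeas : ∀ i, Measurable (X i))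
    (hexch : Exchangeable P X) (δ : ℝ) (hδ : δ ∈ Set.Ioo (0 : ℝ) 1) :
    ENNReal.ofReal (1 - δ) ≤
      P {ω | X (Fin.last n) ω ≤ orderStat 0 (fun i => X i ω) ⌈(1 - δ) * (n + 1 : ℝ)⌉₊} := by
  classical
  obtain ⟨hδ0, hδ1⟩ := hδ
  set k : ℕ := ⌈(1 - δ) * (n + 1 : ℝ)⌉₊ with hkdef
  have hnpos : (0:ℝ) < (n + 1 : ℝ) := by positivity
  have hk1 : 1 ≤ k := by
    rw [hkdef, Nat.one_le_ceil_iff]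
    nlinarith
  have hk2 : k ≤ n + 1 := by
    rw [hkdef, Nat.ceil_le]
    push_cast
    nlinarith
  have hkge : (1 - δ) * (n + 1 : ℝ) ≤ (k : ℝ) := Nat.le_ceil _
  -- the bad events
  set A : Fin (n+1) → Set (Fin (n+1) → ℝ) :=
    fun j => {x | k ≤ (Finset.univ.filter fun i => x i < x j).card} with hAdef
  have hAmeas : ∀ j, MeasurableSet (A j) := by
    intro j
    have hg : Measurable (fun x : Fin (n+1) → ℝ =>
        (Finset.univ.filter fun i => x i < x j).card) := by
      simp only [Finset.card_filter]
      exact Finset.measurable_sum _ (fun i _ => Measurable.ite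
        (measurableSet_lt (measurable_pi_apply i) (measurable_pi_apply j))
        measurable_const measurable_const)
    exact hg MeasurableSpace.measurableSet_top
  set Y : Ω → Fin (n+1) → ℝ := fun ω i => X i ω with hYdef
  have hY : Measurable Y := measurable_pi_lambda _ hmeas
  set B : Fin (n+1) → Set Ω := fun j => Y ⁻¹' (A j) with hBdef
  have hBmeas : ∀ j, MeasurableSet (B j) := fun j => hY (hAmeas j)
  -- all bad events have the same probability
  have hBeq : ∀ j, P (B j) = P (B (Fin.last n)) := by
    intro j
    set σ : Equiv.Perm (Fin (n+1)) := Equiv.swap j (Fin.last n) with hσ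
    have hYσ : Measurable (fun ω => fun i => X (σ i) ω) :=
      measurable_pi_lambda _ (fun i => hmeas (σ i))
    have h1 := hexch σ
    have h2 : ((fun ω => fun i => X (σ i) ω) ⁻¹' (A (Fin.last n))) = B j := by
      ext ω
      simp only [hBdef, hAdef, Set.mem_preimage, Set.mem_setOf_eq, hYdef]
      have hσlast : σ (Fin.last n) = j := Equiv.swap_apply_right _ _
      simp only [hσlast]
      rw [card_filter_comp_perm σ (fun i => X i ω < X j ω)]
    have h3 := congrArg (fun μ => μ (A (Fin.last n))) h1
    rw [Measure.map_apply hYσ (hAmeas _), Measure.map_apply hY (hAmeas _), h2] at h3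
    exact h3
  -- sum bound
  have hsum : ∑ j : Fin (n+1), P (B j) ≤ ((n + 1 - k : ℕ) : ℝ≥0∞) := by
    have hpt : ∀ ω, ∑ j : Fin (n+1), (B j).indicator (fun _ => (1:ℝ≥0∞)) ω
        ≤ ((n + 1 - k : ℕ) : ℝ≥0∞) := by
      intro ω
      have he : ∑ j : Fin (n+1), (B j).indicator (fun _ => (1:ℝ≥0∞)) ω
          = ((Finset.univ.filter fun j => ω ∈ B j).card : ℝ≥0∞) := by
        rw [Finset.card_filter]
        push_cast
        refine Finset.sum_congr rfl (fun j _ => ?_)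
        by_cases h : ω ∈ B j <;> simp [h]
      rw [he]
      have hmem : ∀ j, (ω ∈ B j) ↔ k ≤ (Finset.univ.filter fun i => X i ω < X j ω).card := by
        intro j; simp [hBdef, hAdef, hYdef]
      have hcongr : (Finset.univ.filter fun j => ω ∈ B j)
          = (Finset.univ.filter fun j =>
              k ≤ (Finset.univ.filter fun i => X i ω < X j ω).card) := by
        apply Finset.filter_congr; intro j _; simp [hmem j]
      rw [hcongr]
      exact_mod_cast Nat.cast_le.mpr (card_rank_ge (fun i => X i ω) hk1 hk2)
    calc ∑ j : Fin (n+1), P (B j)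
        = ∑ j : Fin (n+1), ∫⁻ ω, (B j).indicator (fun _ => (1:ℝ≥0∞)) ω ∂P := by
          refine Finset.sum_congr rfl (fun j _ => ?_)
          rw [lintegral_indicator_const (hBmeas j), one_mul]
      _ = ∫⁻ ω, ∑ j : Fin (n+1), (B j).indicator (fun _ => (1:ℝ≥0∞)) ω ∂P :=
          (lintegral_finset_sum _ (fun j _ =>
            (measurable_const.indicator (hBmeas j)))).symm
      _ ≤ ∫⁻ _, ((n + 1 - k : ℕ) : ℝ≥0∞) ∂P := lintegral_mono hpt
      _ = ((n + 1 - k : ℕ) : ℝ≥0∞) := by simp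
  have hconst : ∑ j : Fin (n+1), P (B j) = (n + 1 : ℕ) * P (B (Fin.last n)) := by
    rw [Finset.sum_congr rfl (fun j _ => hBeq j), Finset.sum_const, Finset.card_univ,
      Fintype.card_fin, nsmul_eq_mul]
  -- bound the bad probability by δ
  have hPB : P (B (Fin.last n)) ≤ ENNReal.ofReal δ := by
    have hmul : (n + 1 : ℕ) * P (B (Fin.last n)) ≤ (n + 1 : ℕ) * ENNReal.ofReal δ := by
      refine le_trans (hconst ▸ hsum) ?_
      have hreal : ((n + 1 - k : ℕ) : ℝ) ≤ (n + 1 : ℝ) * δ := by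
        rw [Nat.cast_sub hk2]
        push_cast
        nlinarith
      calc ((n + 1 - k : ℕ) : ℝ≥0∞) = ENNReal.ofReal ((n + 1 - k : ℕ) : ℝ) := by
            rw [ENNReal.ofReal_natCast]
        _ ≤ ENNReal.ofReal ((n + 1 : ℝ) * δ) := ENNReal.ofReal_le_ofReal hreal
        _ = ENNReal.ofReal (n + 1 : ℝ) * ENNReal.ofReal δ :=
            ENNReal.ofReal_mul (by positivity)
        _ = (n + 1 : ℕ) * ENNReal.ofReal δ := by
            congr 1
            rw [← ENNReal.ofReal_natCast (n+1)]
            norm_num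
    have hne0 : ((n + 1 : ℕ) : ℝ≥0∞) ≠ 0 := by simp
    have hnetop : ((n + 1 : ℕ) : ℝ≥0∞) ≠ ⊤ := by simp
    exact (ENNReal.mul_le_mul_iff_right hne0 hnetop).mp hmul
  -- the good event is the complement
  have hset : {ω | X (Fin.last n) ω ≤ orderStat 0 (fun i => X i ω) k} = (B (Fin.last n))ᶜ := by
    ext ω
    simp only [Set.mem_setOf_eq, Set.mem_compl_iff, hBdef, hAdef, hYdef, Set.mem_preimage,
      Set.mem_setOf_eq, not_le]
    exact le_orderStat_iff (fun i => X i ω) (X (Fin.last n) ω) hk1 hk2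
  rw [hset, prob_compl_eq_one_sub (hBmeas _)]
  have : ENNReal.ofReal (1 - δ) = 1 - ENNReal.ofReal δ := by
    rw [ENNReal.ofReal_sub 1 hδ0.le, ENNReal.ofReal_one]
  rw [this]
  exact tsub_le_tsub_left hPB 1
end

section
/- (Exchangeable coordinate bound.) If W_1, ..., W_{n+1} are exchangeable real random variables and E is a permutation-symmetric measurable event determined by (W_1,...,W_{n+1}) such that on E at most k of the W_i exceed a (random, permutation-symmetric) threshold T = T(W_1,...,W_{n+1}), then P({W_{n+1} > T} ∩ E) ≤ k/(n+1). -/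
open MeasureTheory

/-- exchangeable coordinate bound with a symmetric threshold and event. -/
theorem stmt19 {Ω : Type*} [MeasurableSpace Ω] (P : Measure Ω) [IsProbabilityMeasure P]
    (n : ℕ) (W : Fin (n + 1) → Ω → ℝ) (hmeas : ∀ i, Measurable (W i))
    (hexch : Exchangeable P W)
    (T : (Fin (n + 1) → ℝ) → ℝ) (hT : Measurable T)
    (hTsym : ∀ (π : Equiv.Perm (Fin (n + 1))) (w : Fin (n + 1) → ℝ),
      T (fun i => w (π i)) = T w)
    (E : Set (Fin (n + 1) → ℝ)) (hE : MeasurableSet E)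
    (hEsym : ∀ (π : Equiv.Perm (Fin (n + 1))) (w : Fin (n + 1) → ℝ),
      w ∈ E ↔ (fun i => w (π i)) ∈ E)
    (k : ℕ)
    (hcount : ∀ w ∈ E, (Finset.univ.filter (fun i : Fin (n + 1) => T w < w i)).card ≤ k) :
    P {ω | (fun i => W i ω) ∈ E ∧ T (fun i => W i ω) < W (Fin.last n) ω} ≤
      ENNReal.ofReal ((k : ℝ) / (n + 1)) := by
  classical
  have hfm : Measurable (fun ω => fun i => W i ω) := measurable_pi_lambda _ hmeas
  set μ : Measure (Fin (n + 1) → ℝ) := P.map (fun ω => fun i => W i ω) with hμdef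
  have hμprob : IsProbabilityMeasure μ := Measure.isProbabilityMeasure_map hfm.aemeasurable
  have hAm : ∀ j : Fin (n + 1),
      MeasurableSet {w : Fin (n + 1) → ℝ | w ∈ E ∧ T w < w j} := fun j =>
    hE.inter (measurableSet_lt hT (measurable_pi_apply j))
  have hmap : ∀ π : Equiv.Perm (Fin (n + 1)),
      μ.map (fun w i => w (π i)) = μ := by
    intro π
    rw [hμdef, Measure.map_map (measurable_pi_lambda _ fun i => measurable_pi_apply (π i)) hfm]
    exact hexch π
  have key : ∀ j, μ {w | w ∈ E ∧ T w < w j} = μ {w | w ∈ E ∧ T w < w (Fin.last n)} := by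
    intro j
    set π := Equiv.swap j (Fin.last n) with hπdef
    have hπm : Measurable (fun w : Fin (n + 1) → ℝ => fun i => w (π i)) :=
      measurable_pi_lambda _ fun i => measurable_pi_apply (π i)
    have h1 : (μ.map (fun w i => w (π i))) {w | w ∈ E ∧ T w < w (Fin.last n)}
        = μ {w | w ∈ E ∧ T w < w j} := by
      rw [Measure.map_apply hπm (hAm _)]
      congr 1
      ext w
      simp only [Set.mem_preimage, Set.mem_setOf_eq]
      have h2 : π (Fin.last n) = j := Equiv.swap_apply_right j (Fin.last n)
      rw [← hEsym π w, hTsym π w, h2]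
    rw [← h1, hmap π]
  have hsumeq : ∑ j : Fin (n + 1), μ {w | w ∈ E ∧ T w < w j}
      = (n + 1 : ENNReal) * μ {w | w ∈ E ∧ T w < w (Fin.last n)} := by
    simp only [key]
    rw [Finset.sum_const, Finset.card_univ, Fintype.card_fin, nsmul_eq_mul]
    push_cast
    ring
  have hsumle : ∑ j : Fin (n + 1), μ {w | w ∈ E ∧ T w < w j} ≤ (k : ENNReal) := by
    have h1 : ∫⁻ w, ∑ j : Fin (n + 1),
            Set.indicator {w | w ∈ E ∧ T w < w j} (fun _ => (1 : ENNReal)) w ∂μ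
        = ∑ j : Fin (n + 1), μ {w | w ∈ E ∧ T w < w j} := by
      refine Eq.trans (lintegral_finset_sum _ (fun j _ => measurable_one.indicator (hAm j))) ?_
      refine Finset.sum_congr rfl fun j _ => ?_
      exact (lintegral_indicator_const (hAm j) 1).trans (one_mul _)
    rw [← h1]
    have h2 : ∀ w, ∑ j : Fin (n + 1),
        Set.indicator {w | w ∈ E ∧ T w < w j} (fun _ => (1 : ENNReal)) w
        ≤ Set.indicator E (fun _ => (k : ENNReal)) w := by
      intro w
      by_cases hw : w ∈ E
      · have : ∀ j : Fin (n + 1),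
            Set.indicator {w | w ∈ E ∧ T w < w j} (fun _ => (1 : ENNReal)) w
            = if T w < w j then 1 else 0 := by
          intro j
          by_cases h : T w < w j <;> simp [Set.indicator, hw, h]
        simp only [this, Set.indicator_of_mem hw]
        rw [Finset.sum_boole]
        exact_mod_cast Nat.cast_le.mpr (hcount w hw)
      · have : ∀ j : Fin (n + 1),
            Set.indicator {w | w ∈ E ∧ T w < w j} (fun _ => (1 : ENNReal)) w = 0 := by
          intro j
          simp [Set.indicator, hw]
        simp [this, Set.indicator_of_notMem hw]
    calc ∫⁻ w, ∑ j : Fin (n + 1),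
            Set.indicator {w | w ∈ E ∧ T w < w j} (fun _ => (1 : ENNReal)) w ∂μ
        ≤ ∫⁻ w, Set.indicator E (fun _ => (k : ENNReal)) w ∂μ := lintegral_mono h2
      _ = (k : ENNReal) * μ E := lintegral_indicator_const hE _
      _ ≤ (k : ENNReal) * 1 := by
          exact mul_le_mul_right prob_le_one _
      _ = (k : ENNReal) := mul_one _
  have hfinal : μ {w | w ∈ E ∧ T w < w (Fin.last n)} ≤ (k : ENNReal) / (n + 1 : ENNReal) := by
    rw [ENNReal.le_div_iff_mul_le (Or.inl (by simp)) (by left; exact ENNReal.add_ne_top.mpr ⟨ENNReal.natCast_ne_top n, ENNReal.one_ne_top⟩)]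
    rw [mul_comm, ← hsumeq]
    exact hsumle
  have hP : P {ω | (fun i => W i ω) ∈ E ∧ T (fun i => W i ω) < W (Fin.last n) ω}
      = μ {w | w ∈ E ∧ T w < w (Fin.last n)} := by
    rw [hμdef, Measure.map_apply hfm (hAm _)]
    rfl
  rw [hP]
  have hcast : ENNReal.ofReal ((k : ℝ) / (n + 1)) = (k : ENNReal) / (n + 1 : ENNReal) := by
    rw [ENNReal.ofReal_div_of_pos (by positivity)]
    congr 1
    · exact ENNReal.ofReal_natCast k
    · rw [ENNReal.ofReal_add (by positivity) zero_le_one, ENNReal.ofReal_natCast, ENNReal.ofReal_one]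
  rw [hcast]
  exact hfinal
end
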